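/- Let U be uniformly distributed on a bounded interval [l, u] with l < u. Then min_{s ∈ ℝ} Var|U − s| = Var(U)/4, and the minimum is attained at the midpoint s = (l + u)/2. In particular the folding ratio of U equals 1/4. -/

import Mathlib

open MeasureTheory ProbabilityTheory intervalIntegral

lemma unif_prob (l u : ℝ) (hlu : l < u) :
    IsProbabilityMeasure ((ENNReal.ofReal (u - l))⁻¹ • volume.restrict (Set.Icc l u)) := by
  refine IsProbabilityMeasure.mk ?_
  rw [Measure.smul_apply, Measure.restrict_apply_univ, Real.volume_Icc, smul_eq_mul,
    ENNReal.inv_mul_cancel (ENNReal.ofReal_pos.2 (sub_pos.2 hlu)).ne' ENNReal.ofReal_ne_top]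

lemma unif_int (l u : ℝ) (hlu : l < u) (g : ℝ → ℝ) :
    ∫ x, g x ∂((ENNReal.ofReal (u - l))⁻¹ • volume.restrict (Set.Icc l u))
      = (∫ x in l..u, g x) / (u - l) := by
  have hL : (0:ℝ) < u - l := sub_pos.2 hlu
  rw [MeasureTheory.integral_smul_measure, intervalIntegral.integral_of_le hlu.le,
    ← integral_Icc_eq_integral_Ioc, ENNReal.toReal_inv, ENNReal.toReal_ofReal hL.le,
    smul_eq_mul]
  ring

lemma unif_var (l u : ℝ) (hlu : l < u) (f : ℝ → ℝ) (hf : Continuous f) :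
    variance f ((ENNReal.ofReal (u - l))⁻¹ • volume.restrict (Set.Icc l u))
      = (∫ x in l..u, (f x)^2) / (u - l) - ((∫ x in l..u, f x) / (u - l))^2 := by
  set P := (ENNReal.ofReal (u - l))⁻¹ • volume.restrict (Set.Icc l u) with hP
  haveI : IsProbabilityMeasure P := unif_prob l u hlu
  obtain ⟨x₁, -, h₁⟩ := isCompact_Icc.exists_isMinOn (Set.nonempty_Icc.2 hlu.le) hf.continuousOn
  obtain ⟨x₂, -, h₂⟩ := isCompact_Icc.exists_isMaxOn (Set.nonempty_Icc.2 hlu.le) hf.continuousOn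
  have hae : ∀ᵐ x ∂P, x ∈ Set.Icc l u := by
    rw [hP]; exact Measure.ae_smul_measure (ae_restrict_mem measurableSet_Icc) _
  have hmem : MemLp f 2 P :=
    memLp_of_bounded (hae.mono fun x hx => ⟨h₁ hx, h₂ hx⟩) hf.aestronglyMeasurable 2
  rw [variance_eq_sub hmem]
  have h2 := unif_int l u hlu (fun x => (f x)^2)
  have h1 := unif_int l u hlu f
  rw [← hP] at h2 h1
  simp only [Pi.pow_apply]
  rw [h2, h1]


lemma int_abs_right (a b : ℝ) (ha : 0 ≤ a) (hab : a ≤ b) :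
    ∫ x in a..b, |x| = (b^2 - a^2)/2 := by
  rw [show ∫ x in a..b, |x| = ∫ x in a..b, x from
    intervalIntegral.integral_congr fun x hx => by
      rw [Set.uIcc_of_le hab] at hx; exact abs_of_nonneg (ha.trans hx.1)]
  exact integral_id

lemma int_abs_left (a b : ℝ) (hb : b ≤ 0) (hab : a ≤ b) :
    ∫ x in a..b, |x| = (a^2 - b^2)/2 := by
  rw [show ∫ x in a..b, |x| = ∫ x in a..b, -x from
    intervalIntegral.integral_congr fun x hx => by
      rw [Set.uIcc_of_le hab] at hx; exact abs_of_nonpos (hx.2.trans hb)]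
  rw [intervalIntegral.integral_neg, integral_id]; ring

lemma int_abs_mid (a b : ℝ) (ha : a ≤ 0) (hb : 0 ≤ b) :
    ∫ x in a..b, |x| = (a^2 + b^2)/2 := by
  rw [← intervalIntegral.integral_add_adjacent_intervals (b := 0)
    (continuous_abs.intervalIntegrable a 0) (continuous_abs.intervalIntegrable 0 b),
    int_abs_left a 0 le_rfl ha, int_abs_right 0 b le_rfl hb]
  ring

/-- Let `U` be uniformly distributed on a bounded interval `[l, u]`, `l < u`
(i.e. its law `P` is the normalized restriction of Lebesgue measure to `[l, u]`). Then
`min_{s ∈ ℝ} Var |U - s| = Var U / 4`, the minimum being attained at the midpoint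
`s = (l + u) / 2`; in particular the folding ratio of `U` equals `1/4`. -/
theorem stmt_3 (l u : ℝ) (hlu : l < u)
    (P : Measure ℝ)
    (hP : P = (ENNReal.ofReal (u - l))⁻¹ • volume.restrict (Set.Icc l u)) :
    (∀ s : ℝ, variance (fun x => x) P / 4 ≤ variance (fun x => |x - s|) P) ∧
    variance (fun x => |x - (l + u) / 2|) P = variance (fun x => x) P / 4 ∧
    (⨅ s : ℝ, variance (fun x => |x - s|) P) / variance (fun x => x) P = 1 / 4 := by
  have hL : (0:ℝ) < u - l := sub_pos.2 hlu
  have hVarX : variance (fun x => x) P = (u - l)^2 / 12 := by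
    rw [hP, unif_var l u hlu (fun x => x) (by continuity)]
    rw [integral_id, show (∫ x in l..u, x^2) = (u^3 - l^3)/3 by rw [integral_pow]; norm_num]
    field_simp; ring
  have hVarAbs : ∀ s : ℝ, variance (fun x => |x - s|) P
      = ((u-s)^3 - (l-s)^3)/(3*(u-l)) - ((∫ x in l-s..u-s, |x|)/(u-l))^2 := by
    intro s
    rw [hP, unif_var l u hlu (fun x => |x - s|) (by continuity)]
    simp only [sq_abs]
    rw [show (∫ x in l..u, (x - s)^2) = ∫ x in l-s..u-s, x^2 from
        integral_comp_sub_right (fun x => x^2) s,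
      show (∫ x in l..u, |x - s|) = ∫ x in l-s..u-s, |x| from
        integral_comp_sub_right (fun x => |x|) s,
      show (∫ x in l-s..u-s, x^2) = ((u-s)^3 - (l-s)^3)/3 by rw [integral_pow]; norm_num,
      div_div]
  have hmin : ∀ s : ℝ, variance (fun x => x) P / 4 ≤ variance (fun x => |x - s|) P := by
    intro s
    rw [hVarX, hVarAbs s]
    rcases le_or_gt s l with hs | hs
    · rw [int_abs_right _ _ (by linarith) (by linarith)]
      have heq : ((u-s)^3 - (l-s)^3)/(3*(u-l)) - ((((u-s)^2 - (l-s)^2)/2)/(u-l))^2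
          = (u-l)^2/12 := by field_simp; ring
      rw [heq]; nlinarith [sq_nonneg (u-l)]
    rcases le_or_gt u s with hs' | hs'
    · rw [int_abs_left _ _ (by linarith) (by linarith)]
      have heq : ((u-s)^3 - (l-s)^3)/(3*(u-l)) - ((((l-s)^2 - (u-s)^2)/2)/(u-l))^2
          = (u-l)^2/12 := by field_simp; ring
      rw [heq]; nlinarith [sq_nonneg (u-l)]
    · rw [int_abs_mid _ _ (by linarith) (by linarith)]
      have key : ((u-s)^3 - (l-s)^3)/(3*(u-l)) - ((((l-s)^2 + (u-s)^2)/2)/(u-l))^2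
          - (u-l)^2/12/4
          = (((s-l)^2 + (u-s)^2 + 6*(s-l)*(u-s)) * ((s-l) - (u-s))^2) / (16*(u-l)^2) := by
        field_simp; ring
      have hnum : 0 ≤ ((s-l)^2 + (u-s)^2 + 6*(s-l)*(u-s)) * ((s-l) - (u-s))^2 :=
        mul_nonneg (by nlinarith) (sq_nonneg _)
      have hpos : 0 ≤ (((s-l)^2 + (u-s)^2 + 6*(s-l)*(u-s)) * ((s-l) - (u-s))^2)
          / (16*(u-l)^2) := div_nonneg hnum (by positivity)
      linarith
  have hmid : variance (fun x => |x - (l + u) / 2|) P = variance (fun x => x) P / 4 := by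
    rw [hVarAbs ((l + u) / 2), hVarX,
      int_abs_mid _ _ (by linarith) (by linarith)]
    field_simp; ring
  refine ⟨hmin, hmid, ?_⟩
  have hinf : (⨅ s : ℝ, variance (fun x => |x - s|) P) = variance (fun x => x) P / 4 := by
    refine le_antisymm ((ciInf_le ⟨variance (fun x => x) P / 4, ?_⟩ ((l + u) / 2)).trans_eq hmid) (le_ciInf hmin)
    rintro _ ⟨s, rfl⟩; exact hmin s
  rw [hinf, hVarX]
  have h0 : (u - l)^2 ≠ 0 := by positivity
  field_simp
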